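/- Let α₁, α₂ ∈ (0,2) and set p := 1/α₁ + 1/α₂. There exists a constant C, depending only on α₁ and α₂, such that for all w₁, w₂ > 0 and all θ₁, θ₂ ∈ ℝ with θ₁ ≠ 0 and θ₂ ≠ 0, ∫_0^∞ ∏_{k=1,2} min{ (r w_k)^{1/α_k} , (r w_k)^{−1/α_k} θ_k^{−2} } · r^{−2} dr ≤ C · |θ₁θ₂|^{1/p − 1} · w₁^{α₂/(α₁+α₂)} · w₂^{α₁/(α₁+α₂)}. -/

import Mathlib

open MeasureTheory
open scoped ENNReal

lemma aux_lintegral_Ioc (s c : ℝ) (hs : -1 < s) (hc : 0 < c) :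
    ∫⁻ r in Set.Ioc (0:ℝ) c, ENNReal.ofReal (r ^ s) = ENNReal.ofReal (c ^ (s+1) / (s+1)) := by
  rw [← ofReal_integral_eq_lintegral_ofReal ((intervalIntegral.intervalIntegrable_rpow' hs).1)
    (by filter_upwards [ae_restrict_mem measurableSet_Ioc] with r hr
        exact Real.rpow_nonneg hr.1.le s)]
  congr 1
  rw [← intervalIntegral.integral_of_le hc.le, integral_rpow (Or.inl hs),
    Real.zero_rpow (by linarith), sub_zero]

lemma aux_lintegral_Ioi (s c : ℝ) (hs : s < -1) (hc : 0 < c) :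
    ∫⁻ r in Set.Ioi c, ENNReal.ofReal (r ^ s) = ENNReal.ofReal (c ^ (s+1) / (-(s+1))) := by
  rw [← ofReal_integral_eq_lintegral_ofReal (integrableOn_Ioi_rpow_of_lt hs hc)
    (by filter_upwards [ae_restrict_mem measurableSet_Ioi] with r hr
        exact Real.rpow_nonneg (hc.le.trans hr.le) s)]
  rw [integral_Ioi_rpow_of_lt hs hc]
  congr 1
  rw [div_neg, neg_div]

lemma aux_rpow_prod (t w₁ w₂ A B C A' B' C' s A'' B'' C'' : ℝ)
    (ht : 0 < t) (h1 : 0 < w₁) (h2 : 0 < w₂)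
    (hA : A + A' * s = A'') (hB : B + B' * s = B'') (hC : C + C' * s = C'') :
    (t ^ A * w₁ ^ B * w₂ ^ C) * (t ^ A' * w₁ ^ B' * w₂ ^ C') ^ s
      = t ^ A'' * w₁ ^ B'' * w₂ ^ C'' := by
  rw [Real.mul_rpow (by positivity) (by positivity),
    Real.mul_rpow (by positivity) (by positivity),
    ← Real.rpow_mul ht.le, ← Real.rpow_mul h1.le, ← Real.rpow_mul h2.le,
    ← hA, ← hB, ← hC, Real.rpow_add ht, Real.rpow_add h1, Real.rpow_add h2]
  ring

/-- for `α₁, α₂ ∈ (0,2)` and `p := 1/α₁ + 1/α₂`, there is `C` depending only on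
`α₁, α₂` such that for all `w₁, w₂ > 0` and `θ₁, θ₂ ≠ 0`,
`∫_0^∞ ∏_k min{(rw_k)^{1/α_k}, (rw_k)^{-1/α_k} θ_k^{-2}} r^{-2} dr
  ≤ C |θ₁θ₂|^{1/p-1} w₁^{α₂/(α₁+α₂)} w₂^{α₁/(α₁+α₂)}`. -/
theorem stmt_8 (α₁ α₂ : ℝ) (hα₁ : α₁ ∈ Set.Ioo (0:ℝ) 2) (hα₂ : α₂ ∈ Set.Ioo (0:ℝ) 2) :
    ∃ C : ℝ, 0 < C ∧
      ∀ w₁ w₂ θ₁ θ₂ : ℝ, 0 < w₁ → 0 < w₂ → θ₁ ≠ 0 → θ₂ ≠ 0 →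
        ∫⁻ r in Set.Ioi (0:ℝ), ENNReal.ofReal
            (min ((r * w₁) ^ (1/α₁)) ((r * w₁) ^ (-1/α₁) / θ₁ ^ 2) *
             min ((r * w₂) ^ (1/α₂)) ((r * w₂) ^ (-1/α₂) / θ₂ ^ 2) * r ^ (-2 : ℝ))
          ≤ ENNReal.ofReal (C * |θ₁ * θ₂| ^ (1 / (1/α₁ + 1/α₂) - 1)
              * w₁ ^ (α₂ / (α₁ + α₂)) * w₂ ^ (α₁ / (α₁ + α₂))) := by
  obtain ⟨hα₁0, hα₁2⟩ := hα₁
  obtain ⟨hα₂0, hα₂2⟩ := hα₂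
  set a₁ := 1/α₁ with ha₁def
  set a₂ := 1/α₂ with ha₂def
  have ha₁ : 0 < a₁ := by rw [ha₁def]; positivity
  have ha₂ : 0 < a₂ := by rw [ha₂def]; positivity
  set p := a₁ + a₂ with hpdef
  have hp1 : 1 < p := by
    have h1 : (1:ℝ)/2 < a₁ := by rw [ha₁def]; exact one_div_lt_one_div_of_lt hα₁0 hα₁2
    have h2 : (1:ℝ)/2 < a₂ := by rw [ha₂def]; exact one_div_lt_one_div_of_lt hα₂0 hα₂2
    rw [hpdef]; linarith
  have hp0 : (0:ℝ) < p := by linarith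
  set e₁ := α₂ / (α₁ + α₂) with he₁def
  set e₂ := α₁ / (α₁ + α₂) with he₂def
  have hsum : (0:ℝ) < α₁ + α₂ := by linarith
  have he₁p : e₁ * p = a₁ := by
    rw [he₁def, hpdef, ha₁def, ha₂def]; field_simp; ring
  have he₂p : e₂ * p = a₂ := by
    rw [he₂def, hpdef, ha₁def, ha₂def]; field_simp; ring
  have hpm : (0:ℝ) < p - 1 := by linarith
  have hpp : (0:ℝ) < p + 1 := by linarith
  refine ⟨1/(p-1) + 1/(p+1), by positivity, fun w₁ w₂ θ₁ θ₂ hw₁ hw₂ hθ₁ hθ₂ => ?_⟩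
  set t := |θ₁ * θ₂| with htdef
  have ht : 0 < t := abs_pos.mpr (mul_ne_zero hθ₁ hθ₂)
  set d := t ^ (-(1/p)) * w₁ ^ (-e₁) * w₂ ^ (-e₂) with hddef
  have hd : 0 < d := by positivity
  set M := t ^ (1/p - 1) * w₁ ^ e₁ * w₂ ^ e₂ with hMdef
  have hM : 0 < M := by positivity
  -- identity I1
  have hI1 : (w₁ ^ a₁ * w₂ ^ a₂) * d ^ (p-1) = M := by
    have h := aux_rpow_prod t w₁ w₂ 0 a₁ a₂ (-(1/p)) (-e₁) (-e₂) (p-1) (1/p-1) e₁ e₂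
      ht hw₁ hw₂ (by linear_combination -(mul_inv_cancel₀ hp0.ne'))
      (by linear_combination -he₁p) (by linear_combination -he₂p)
    rw [Real.rpow_zero, one_mul] at h
    rw [← hddef, ← hMdef] at h
    exact h
  -- identity I2
  have hI2 : (t ^ (-(2:ℝ)) * w₁ ^ (-a₁) * w₂ ^ (-a₂)) * d ^ (-(p+1)) = M := by
    have h := aux_rpow_prod t w₁ w₂ (-2) (-a₁) (-a₂) (-(1/p)) (-e₁) (-e₂) (-(p+1))
      (1/p-1) e₁ e₂ ht hw₁ hw₂ (by linear_combination mul_inv_cancel₀ hp0.ne')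
      (by linear_combination he₁p) (by linear_combination he₂p)
    rw [← hddef, ← hMdef] at h
    exact h
  have hsplit : Set.Ioi (0:ℝ) = Set.Ioc 0 d ∪ Set.Ioi d := (Set.Ioc_union_Ioi_eq_Ioi hd.le).symm
  rw [hsplit, lintegral_union measurableSet_Ioi (Set.Ioc_disjoint_Ioi le_rfl)]
  have hK₁ : (0:ℝ) ≤ w₁ ^ a₁ * w₂ ^ a₂ := by positivity
  have hmeas1 : Measurable fun r : ℝ =>
      ENNReal.ofReal ((w₁ ^ a₁ * w₂ ^ a₂) * r ^ (p-2)) := by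
    fun_prop
  have hK₂ : (0:ℝ) ≤ t ^ (-(2:ℝ)) * w₁ ^ (-a₁) * w₂ ^ (-a₂) := by positivity
  have hmeas2 : Measurable fun r : ℝ =>
      ENNReal.ofReal ((t ^ (-(2:ℝ)) * w₁ ^ (-a₁) * w₂ ^ (-a₂)) * r ^ (-p-2)) := by
    fun_prop
  have piece1 : ∫⁻ r in Set.Ioc (0:ℝ) d, ENNReal.ofReal
        (min ((r * w₁) ^ a₁) ((r * w₁) ^ (-1/α₁) / θ₁ ^ 2) *
         min ((r * w₂) ^ a₂) ((r * w₂) ^ (-1/α₂) / θ₂ ^ 2) * r ^ (-2 : ℝ))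
      ≤ ENNReal.ofReal (1/(p-1) * M) := by
    calc _ ≤ ∫⁻ r in Set.Ioc (0:ℝ) d,
          ENNReal.ofReal ((w₁ ^ a₁ * w₂ ^ a₂) * r ^ (p-2)) := by
          apply setLIntegral_mono hmeas1
          intro r hr
          apply ENNReal.ofReal_le_ofReal
          have hr0 : 0 < r := hr.1
          have h1 : min ((r * w₁) ^ a₁) ((r * w₁) ^ (-1/α₁) / θ₁ ^ 2) ≤ (r * w₁) ^ a₁ :=
            min_le_left _ _
          have h2 : min ((r * w₂) ^ a₂) ((r * w₂) ^ (-1/α₂) / θ₂ ^ 2) ≤ (r * w₂) ^ a₂ :=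
            min_le_left _ _
          have h2n : 0 ≤ min ((r * w₂) ^ a₂) ((r * w₂) ^ (-1/α₂) / θ₂ ^ 2) :=
            le_min (Real.rpow_nonneg (by positivity) _)
              (div_nonneg (Real.rpow_nonneg (by positivity) _) (sq_nonneg _))
          have key : min ((r * w₁) ^ a₁) ((r * w₁) ^ (-1/α₁) / θ₁ ^ 2) *
              min ((r * w₂) ^ a₂) ((r * w₂) ^ (-1/α₂) / θ₂ ^ 2)
              ≤ (r * w₁) ^ a₁ * (r * w₂) ^ a₂ :=
            mul_le_mul h1 h2 h2n (Real.rpow_nonneg (by positivity) _)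
          calc _ ≤ (r * w₁) ^ a₁ * (r * w₂) ^ a₂ * r ^ (-2:ℝ) :=
                mul_le_mul_of_nonneg_right key (Real.rpow_nonneg hr0.le _)
            _ = (w₁ ^ a₁ * w₂ ^ a₂) * r ^ (p-2) := by
                rw [Real.mul_rpow hr0.le hw₁.le, Real.mul_rpow hr0.le hw₂.le,
                  show p - 2 = a₁ + (a₂ + -2) by rw [hpdef]; ring,
                  Real.rpow_add hr0, Real.rpow_add hr0]
                ring
      _ = ENNReal.ofReal (w₁ ^ a₁ * w₂ ^ a₂) *
            ∫⁻ r in Set.Ioc (0:ℝ) d, ENNReal.ofReal (r ^ (p-2)) := by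
          simp_rw [ENNReal.ofReal_mul hK₁]
          rw [lintegral_const_mul' _ _ ENNReal.ofReal_ne_top]
      _ ≤ ENNReal.ofReal (1/(p-1) * M) := by
          rw [aux_lintegral_Ioc (p-2) d (by linarith) hd,
            ← ENNReal.ofReal_mul hK₁]
          apply ENNReal.ofReal_le_ofReal
          rw [show p - 2 + 1 = p - 1 by ring]
          have heq : w₁ ^ a₁ * w₂ ^ a₂ * (d ^ (p-1) / (p-1)) = 1/(p-1) * M := by
            rw [← hI1]; ring
          exact le_of_eq heq
  have piece2 : ∫⁻ r in Set.Ioi d, ENNReal.ofReal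
        (min ((r * w₁) ^ a₁) ((r * w₁) ^ (-1/α₁) / θ₁ ^ 2) *
         min ((r * w₂) ^ a₂) ((r * w₂) ^ (-1/α₂) / θ₂ ^ 2) * r ^ (-2 : ℝ))
      ≤ ENNReal.ofReal (1/(p+1) * M) := by
    have htsq : θ₁ ^ 2 * θ₂ ^ 2 = t ^ (2:ℝ) := by
      rw [htdef, show (2:ℝ) = ((2:ℕ):ℝ) by norm_num, Real.rpow_natCast, ← mul_pow, sq_abs,
        mul_pow]
    calc _ ≤ ∫⁻ r in Set.Ioi d,
          ENNReal.ofReal ((t ^ (-(2:ℝ)) * w₁ ^ (-a₁) * w₂ ^ (-a₂)) * r ^ (-p-2)) := by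
          apply setLIntegral_mono hmeas2
          intro r hr
          apply ENNReal.ofReal_le_ofReal
          have hr0 : 0 < r := hd.trans hr
          have h1 : min ((r * w₁) ^ a₁) ((r * w₁) ^ (-1/α₁) / θ₁ ^ 2)
              ≤ (r * w₁) ^ (-a₁) / θ₁ ^ 2 := by
            rw [show -a₁ = -1/α₁ by rw [ha₁def]; ring]
            exact min_le_right _ _
          have h2 : min ((r * w₂) ^ a₂) ((r * w₂) ^ (-1/α₂) / θ₂ ^ 2)
              ≤ (r * w₂) ^ (-a₂) / θ₂ ^ 2 := by
            rw [show -a₂ = -1/α₂ by rw [ha₂def]; ring]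
            exact min_le_right _ _
          have h1n : 0 ≤ min ((r * w₁) ^ a₁) ((r * w₁) ^ (-1/α₁) / θ₁ ^ 2) :=
            le_min (Real.rpow_nonneg (by positivity) _)
              (div_nonneg (Real.rpow_nonneg (by positivity) _) (sq_nonneg _))
          have h2n : 0 ≤ min ((r * w₂) ^ a₂) ((r * w₂) ^ (-1/α₂) / θ₂ ^ 2) :=
            le_min (Real.rpow_nonneg (by positivity) _)
              (div_nonneg (Real.rpow_nonneg (by positivity) _) (sq_nonneg _))
          have key : min ((r * w₁) ^ a₁) ((r * w₁) ^ (-1/α₁) / θ₁ ^ 2) *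
              min ((r * w₂) ^ a₂) ((r * w₂) ^ (-1/α₂) / θ₂ ^ 2)
              ≤ ((r * w₁) ^ (-a₁) / θ₁ ^ 2) * ((r * w₂) ^ (-a₂) / θ₂ ^ 2) :=
            mul_le_mul h1 h2 h2n
              (div_nonneg (Real.rpow_nonneg (by positivity) _) (sq_nonneg _))
          calc _ ≤ ((r * w₁) ^ (-a₁) / θ₁ ^ 2) * ((r * w₂) ^ (-a₂) / θ₂ ^ 2) * r ^ (-2:ℝ) :=
                mul_le_mul_of_nonneg_right key (Real.rpow_nonneg hr0.le _)
            _ = (t ^ (-(2:ℝ)) * w₁ ^ (-a₁) * w₂ ^ (-a₂)) * r ^ (-p-2) := by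
                rw [Real.mul_rpow hr0.le hw₁.le, Real.mul_rpow hr0.le hw₂.le,
                  show -p - 2 = -a₁ + (-a₂ + -2) by rw [hpdef]; ring,
                  Real.rpow_add hr0, Real.rpow_add hr0,
                  Real.rpow_neg ht.le, ← htsq]
                field_simp
      _ = ENNReal.ofReal (t ^ (-(2:ℝ)) * w₁ ^ (-a₁) * w₂ ^ (-a₂)) *
            ∫⁻ r in Set.Ioi d, ENNReal.ofReal (r ^ (-p-2)) := by
          simp_rw [ENNReal.ofReal_mul hK₂]
          rw [lintegral_const_mul' _ _ ENNReal.ofReal_ne_top]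
      _ ≤ ENNReal.ofReal (1/(p+1) * M) := by
          rw [aux_lintegral_Ioi (-p-2) d (by linarith) hd, ← ENNReal.ofReal_mul hK₂]
          apply ENNReal.ofReal_le_ofReal
          rw [show -p - 2 + 1 = -(p+1) by ring, neg_neg]
          have heq : t ^ (-(2:ℝ)) * w₁ ^ (-a₁) * w₂ ^ (-a₂) * (d ^ (-(p+1)) / (p+1))
              = 1/(p+1) * M := by rw [← hI2]; ring
          exact le_of_eq heq
  calc _ ≤ ENNReal.ofReal (1/(p-1) * M) + ENNReal.ofReal (1/(p+1) * M) :=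
        add_le_add piece1 piece2
    _ = ENNReal.ofReal ((1/(p-1) + 1/(p+1)) * t ^ (1 / p - 1) * w₁ ^ e₁ * w₂ ^ e₂) := by
        rw [← ENNReal.ofReal_add (by positivity) (by positivity)]
        congr 1
        rw [hMdef]
        ring
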